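/- Ewens sampling formula: for a sample $X_1,\dots,X_n$ from the generalized Pólya urn scheme with precision $\alpha > 0$ and atomless base distribution, the probability that the induced partition has $v_j$ blocks of size $j$ for each $j$ (where $\sum_j j v_j = n$) is $\frac{n!}{\alpha(\alpha+1)\cdots(\alpha+n-1)} \prod_{j=1}^n \frac{\alpha^{v_j}}{j^{v_j} v_j!}$. -/

import Mathlib

open MeasureTheory ProbabilityTheory

/-- One predictive step of the generalized Pólya urn (Blackwell–MacQueen) scheme:
given previous values `x`, the next value is drawn from
`α/(α+n) • G0 + 1/(α+n) • ∑ δ_{x i}`. -/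
noncomputable def polyaStep (α : ℝ) (G0 : MeasureTheory.Measure ℝ) {n : ℕ} (x : Fin n → ℝ) :
    MeasureTheory.Measure ℝ :=
  ENNReal.ofReal (α / (α + n)) • G0
    + ENNReal.ofReal (1 / (α + n)) • ∑ i : Fin n, MeasureTheory.Measure.dirac (x i)

/-- Joint law of the first `n` draws of the generalized Pólya urn scheme. -/
noncomputable def polyaLaw (α : ℝ) (G0 : MeasureTheory.Measure ℝ) :
    (n : ℕ) → MeasureTheory.Measure (Fin n → ℝ)
  | 0 => MeasureTheory.Measure.dirac Fin.elim0
  | n + 1 => (polyaLaw α G0 n).bind (fun x => (polyaStep α G0 x).map (Fin.snoc x))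

/-- Number of distinct values among `x 1, …, x n` that are repeated exactly
`j` times (i.e. blocks of size `j` of the induced partition). -/
noncomputable def blocksOfSize {n : ℕ} (x : Fin n → ℝ) (j : ℕ) : ℕ :=
  Set.ncard {r : ℝ | (∃ i, x i = r) ∧ Set.ncard {i | x i = r} = j}


open Finset
open scoped Classical ENNReal

/-- number of indices mapping to `r`. -/
noncomputable def fiberCard {n : ℕ} (x : Fin n → ℝ) (r : ℝ) : ℕ :=
  (Finset.univ.filter fun i => x i = r).card

/-- Finset version of `blocksOfSize`. -/
noncomputable def typeCount {n : ℕ} (x : Fin n → ℝ) (j : ℕ) : ℕ :=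
  ((Finset.univ.image x).filter fun r => fiberCard x r = j).card

lemma ncard_fiber {n : ℕ} (x : Fin n → ℝ) (r : ℝ) :
    Set.ncard {i | x i = r} = fiberCard x r := by
  rw [fiberCard, ← Set.ncard_coe_finset]
  congr 1
  ext i; simp

lemma blocksOfSize_eq_typeCount {n : ℕ} (x : Fin n → ℝ) (j : ℕ) :
    blocksOfSize x j = typeCount x j := by
  rw [blocksOfSize, typeCount, ← Set.ncard_coe_finset]
  congr 1
  ext r
  simp only [Finset.coe_filter, Finset.mem_image, Finset.mem_univ, true_and,
    Set.mem_setOf_eq, ncard_fiber]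

lemma fiberCard_eq_sum {n : ℕ} (x : Fin n → ℝ) (r : ℝ) :
    fiberCard x r = ∑ i : Fin n, if x i = r then 1 else 0 := by
  rw [fiberCard, Finset.card_filter]

lemma fiberCard_snoc {n : ℕ} (x : Fin n → ℝ) (y : ℝ) (r : ℝ) :
    fiberCard (Fin.snoc x y) r = fiberCard x r + if y = r then 1 else 0 := by
  rw [fiberCard_eq_sum, fiberCard_eq_sum, Fin.sum_univ_castSucc]
  simp [Fin.snoc_castSucc, Fin.snoc_last]

lemma fiberCard_pos_iff {n : ℕ} (x : Fin n → ℝ) (r : ℝ) :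
    0 < fiberCard x r ↔ ∃ i, x i = r := by
  simp [fiberCard, Finset.card_pos, Finset.filter_nonempty_iff]

lemma fiberCard_le {n : ℕ} (x : Fin n → ℝ) (r : ℝ) : fiberCard x r ≤ n := by
  simpa [fiberCard] using (Finset.card_filter_le Finset.univ fun i => x i = r)

lemma typeCount_zero {n : ℕ} (x : Fin n → ℝ) : typeCount x 0 = 0 := by
  rw [typeCount, Finset.card_eq_zero, Finset.filter_eq_empty_iff]
  intro r hr
  rw [Finset.mem_image] at hr
  obtain ⟨i, _, rfl⟩ := hr
  have := (fiberCard_pos_iff x (x i)).2 ⟨i, rfl⟩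
  omega

lemma typeCount_eq_zero_of_gt {n : ℕ} (x : Fin n → ℝ) {j : ℕ} (hj : n < j) :
    typeCount x j = 0 := by
  rw [typeCount, Finset.card_eq_zero, Finset.filter_eq_empty_iff]
  intro r _
  have := fiberCard_le x r
  omega

/-- double counting : `j * typeCount x j` counts indices in blocks of size `j`. -/
lemma mul_typeCount {n : ℕ} (x : Fin n → ℝ) (j : ℕ) :
    j * typeCount x j = (Finset.univ.filter fun i => fiberCard x (x i) = j).card := by
  classical
  rw [Finset.card_eq_sum_card_fiberwise
    (f := x) (t := (Finset.univ.image x).filter fun r => fiberCard x r = j)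
    (by intro i hi
        simp only [Finset.mem_coe, Finset.mem_filter, Finset.mem_univ, true_and] at hi ⊢
        exact ⟨Finset.mem_image_of_mem x (Finset.mem_univ i), hi⟩)]
  rw [typeCount, mul_comm, ← Finset.sum_const_nat (m := j) ?_]
  intro r hr
  simp only [Finset.mem_filter, Finset.mem_image, Finset.mem_univ, true_and] at hr
  rw [Finset.filter_filter]
  have heq : Finset.filter (fun a => fiberCard x (x a) = j ∧ x a = r) Finset.univ
      = Finset.filter (fun a => x a = r) Finset.univ := by
    apply Finset.filter_congr
    intro a _
    constructor
    · exact fun h => h.2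
    · exact fun h => ⟨by rw [h, hr.2], h⟩
  rw [heq, ← fiberCard, hr.2]

/-- total count: every index lies in a block of size between 1 and n. -/
lemma sum_mul_typeCount {n : ℕ} (x : Fin n → ℝ) :
    ∑ j ∈ Finset.Icc 1 n, j * typeCount x j = n := by
  classical
  have : ∀ j ∈ Finset.Icc 1 n, j * typeCount x j
      = (Finset.univ.filter fun i => fiberCard x (x i) = j).card :=
    fun j _ => mul_typeCount x j
  rw [Finset.sum_congr rfl this]
  rw [← Finset.card_eq_sum_card_fiberwise (f := fun i => fiberCard x (x i))
    (t := Finset.Icc 1 n) ?_]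
  · simp
  · intro i _
    rw [Finset.mem_coe, Finset.mem_Icc]
    exact ⟨(fiberCard_pos_iff x (x i)).2 ⟨i, rfl⟩, fiberCard_le x (x i)⟩

lemma fiberCard_def {n : ℕ} (x : Fin n → ℝ) (r : ℝ) :
    fiberCard x r = (Finset.univ.filter fun i => x i = r).card := rfl

lemma typeCount_def {n : ℕ} (x : Fin n → ℝ) (j : ℕ) :
    typeCount x j = ((Finset.univ.image x).filter fun r => fiberCard x r = j).card := rfl

lemma image_snoc {n : ℕ} (x : Fin n → ℝ) (y : ℝ) :
    Finset.univ.image (Fin.snoc x y : Fin (n+1) → ℝ) = insert y (Finset.univ.image x) := by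
  ext r
  simp only [Finset.mem_image, Finset.mem_univ, true_and, Finset.mem_insert]
  constructor
  · rintro ⟨i, rfl⟩
    induction i using Fin.lastCases with
    | last => left; rw [Fin.snoc_last]
    | cast i => right; exact ⟨i, by rw [Fin.snoc_castSucc]⟩
  · rintro (rfl | ⟨i, rfl⟩)
    · exact ⟨Fin.last n, by simp⟩
    · exact ⟨i.castSucc, by simp⟩

lemma fiberCard_eq_zero {n : ℕ} (x : Fin n → ℝ) (y : ℝ) (hy : ∀ i, x i ≠ y) :
    fiberCard x y = 0 := by
  by_contra h
  obtain ⟨i, hi⟩ := (fiberCard_pos_iff x y).1 (Nat.pos_of_ne_zero h)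
  exact hy i hi

lemma typeCount_snoc_fresh {n : ℕ} (x : Fin n → ℝ) (y : ℝ) (hy : ∀ i, x i ≠ y) (j : ℕ) :
    typeCount (Fin.snoc x y) j = typeCount x j + if j = 1 then 1 else 0 := by
  classical
  have hyR : y ∉ Finset.univ.image x := by
    simp only [Finset.mem_image, Finset.mem_univ, true_and, not_exists]
    exact hy
  rw [typeCount_def, image_snoc, Finset.filter_insert]
  have hfilt : (Finset.univ.image x).filter (fun r => fiberCard (Fin.snoc x y) r = j)
      = (Finset.univ.image x).filter (fun r => fiberCard x r = j) := by
    apply Finset.filter_congr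
    intro r hr
    have hry : y ≠ r := by rintro rfl; exact hyR hr
    rw [fiberCard_snoc, if_neg hry, add_zero]
  have hPy : fiberCard (Fin.snoc x y) y = 1 := by
    rw [fiberCard_snoc, if_pos rfl, fiberCard_eq_zero x y hy]
  rw [hPy, hfilt]
  by_cases hj : j = 1
  · rw [if_pos hj.symm, if_pos hj, Finset.card_insert_of_notMem
      (fun h => hyR (Finset.mem_of_mem_filter y h)), ← typeCount_def]
  · rw [if_neg (Ne.symm hj), if_neg hj, add_zero, ← typeCount_def]

lemma typeCount_snoc_self {n : ℕ} (x : Fin n → ℝ) (i : Fin n) (j : ℕ) :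
    typeCount (Fin.snoc x (x i)) j + (if j = fiberCard x (x i) then 1 else 0)
      = typeCount x j + (if j = fiberCard x (x i) + 1 then 1 else 0) := by
  classical
  set c := fiberCard x (x i) with hc
  set R := Finset.univ.image x with hR
  have hyR : x i ∈ R := Finset.mem_image_of_mem x (Finset.mem_univ i)
  have hRsplit : R = insert (x i) (R.erase (x i)) := (Finset.insert_erase hyR).symm
  have herase : ∀ (f : ℝ → ℕ) (j : ℕ),
      (R.filter fun r => f r = j).card
      = ((R.erase (x i)).filter fun r => f r = j).card + (if f (x i) = j then 1 else 0) := by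
    intro f j
    conv_lhs => rw [hRsplit]
    rw [Finset.filter_insert]
    by_cases h : f (x i) = j
    · rw [if_pos h, if_pos h, Finset.card_insert_of_notMem (fun hmem => by
        have := Finset.mem_of_mem_filter _ hmem
        exact (Finset.notMem_erase (x i) R) this)]
    · rw [if_neg h, if_neg h, add_zero]
  have hcongr : (R.erase (x i)).filter (fun r => fiberCard (Fin.snoc x (x i)) r = j)
      = (R.erase (x i)).filter (fun r => fiberCard x r = j) := by
    apply Finset.filter_congr
    intro r hr
    have : x i ≠ r := (Finset.ne_of_mem_erase hr).symm
    rw [fiberCard_snoc, if_neg this, add_zero]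
  have h1 : typeCount (Fin.snoc x (x i)) j
      = ((R.erase (x i)).filter (fun r => fiberCard x r = j)).card
        + (if c + 1 = j then 1 else 0) := by
    rw [typeCount_def, image_snoc, ← hR, Finset.insert_eq_self.2 hyR,
      herase, hcongr, fiberCard_snoc, if_pos rfl, ← hc]
  have h2 : typeCount x j
      = ((R.erase (x i)).filter (fun r => fiberCard x r = j)).card
        + (if c = j then 1 else 0) := by
    rw [typeCount_def, ← hR, herase, ← hc]
  rw [h1, h2]
  split_ifs <;> omega

def typeEvent (n : ℕ) (v : ℕ → ℕ) : Set (Fin n → ℝ) :=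
  {x | ∀ j ∈ Finset.Icc 1 n, typeCount x j = v j}

def setA (n : ℕ) (v : ℕ → ℕ) : Set (Fin n → ℝ) :=
  {x | ∀ j ∈ Finset.Icc 1 (n+1), typeCount x j + (if j = 1 then 1 else 0) = v j}

def setB (n : ℕ) (v : ℕ → ℕ) (j : ℕ) : Set (Fin n → ℝ) :=
  {x | ∀ k ∈ Finset.Icc 1 (n+1),
    typeCount x k + (if k = j+1 then 1 else 0) = v k + (if k = j then 1 else 0)}

noncomputable def freshType (v : ℕ → ℕ) : ℕ → ℕ := fun k => if k = 1 then v 1 - 1 else v k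

noncomputable def joinType (v : ℕ → ℕ) (j : ℕ) : ℕ → ℕ :=
  fun k => if k = j then v j + 1 else if k = j + 1 then v (j+1) - 1 else v k

lemma setA_eq {n : ℕ} (hn : 1 ≤ n) (v : ℕ → ℕ) (h1 : 1 ≤ v 1) (h2 : v (n+1) = 0) :
    setA n v = typeEvent n (freshType v) := by
  ext x
  simp only [setA, typeEvent, Set.mem_setOf_eq, Finset.mem_Icc]
  constructor
  · intro h j hj
    have hj' := h j ⟨hj.1, hj.2.trans (Nat.le_succ n)⟩
    unfold freshType
    split_ifs with he
    · subst he; rw [if_pos rfl] at hj'; omega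
    · rw [if_neg he] at hj'; omega
  · intro h j hj
    rcases Nat.lt_or_ge j (n+1) with hlt | hge
    · have hj' := h j ⟨hj.1, by omega⟩
      unfold freshType at hj'
      split_ifs with he
      · subst he; rw [if_pos rfl] at hj'; omega
      · rw [if_neg he] at hj'; omega
    · have hj1 : j = n + 1 := by omega
      subst hj1
      rw [typeCount_eq_zero_of_gt x (by omega), if_neg (by omega), h2]

lemma setA_empty {n : ℕ} (v : ℕ → ℕ) (h1 : v 1 = 0) : setA n v = ∅ := by
  apply Set.eq_empty_iff_forall_notMem.2
  intro x hx
  have h5 := hx 1 (by rw [Finset.mem_Icc]; omega)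
  rw [if_pos rfl] at h5
  omega

lemma setB_eq {n : ℕ} (v : ℕ → ℕ) {j : ℕ} (hj : j ∈ Finset.Icc 1 n)
    (hC1 : 1 ≤ v (j+1)) (hC2 : v (n+1) = if j = n then 1 else 0) :
    setB n v j = typeEvent n (joinType v j) := by
  rw [Finset.mem_Icc] at hj
  ext x
  simp only [setB, typeEvent, Set.mem_setOf_eq, Finset.mem_Icc]
  constructor
  · intro h k hk
    have hk' := h k ⟨hk.1, hk.2.trans (Nat.le_succ n)⟩
    unfold joinType
    split_ifs with he1 he2
    · subst he1; rw [if_neg (by omega), if_pos rfl] at hk'; omega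
    · subst he2; rw [if_pos rfl, if_neg (show ¬ j + 1 = j by omega)] at hk'; omega
    · rw [if_neg (fun hh : k = j + 1 => he2 hh), if_neg (fun hh : k = j => he1 hh)] at hk'
      omega
  · intro h k hk
    rcases Nat.lt_or_ge k (n+1) with hlt | hge
    · have hk' := h k ⟨hk.1, by omega⟩
      unfold joinType at hk'
      split_ifs at hk' with he1 he2
      · subst he1; rw [if_neg (by omega), if_pos rfl]; omega
      · subst he2; rw [if_pos rfl, if_neg (by omega)]; omega
      · rw [if_neg he1, if_neg he2]; omega
    · have hk1 : k = n + 1 := by omega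
      subst hk1
      rw [typeCount_eq_zero_of_gt x (by omega), hC2]
      split_ifs <;> omega

lemma setB_empty1 {n : ℕ} (v : ℕ → ℕ) {j : ℕ} (hj : j ∈ Finset.Icc 1 n)
    (h : v (j+1) = 0) : setB n v j = ∅ := by
  rw [Finset.mem_Icc] at hj
  apply Set.eq_empty_iff_forall_notMem.2
  intro x hx
  have h5 := hx (j+1) (by rw [Finset.mem_Icc]; omega)
  rw [if_pos rfl, if_neg (by omega)] at h5
  omega

lemma setB_empty2 {n : ℕ} (v : ℕ → ℕ) {j : ℕ} (hj : j ∈ Finset.Icc 1 n)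
    (h : v (n+1) ≠ if j = n then 1 else 0) : setB n v j = ∅ := by
  rw [Finset.mem_Icc] at hj
  apply Set.eq_empty_iff_forall_notMem.2
  intro x hx
  have h5 := hx (n+1) (by rw [Finset.mem_Icc]; omega)
  rw [typeCount_eq_zero_of_gt x (by omega)] at h5
  split_ifs at h5 h <;> omega

lemma Icc_succ_insert (n : ℕ) : Finset.Icc 1 (n+1) = insert (n+1) (Finset.Icc 1 n) :=
  Finset.ext fun a => by simp only [Finset.mem_Icc, Finset.mem_insert]; omega

lemma sum_Icc_succ (n : ℕ) (v : ℕ → ℕ) :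
    ∑ k ∈ Finset.Icc 1 (n+1), k * v k = (n+1) * v (n+1) + ∑ k ∈ Finset.Icc 1 n, k * v k := by
  rw [Icc_succ_insert, Finset.sum_insert (by simp [Finset.mem_Icc])]

lemma sum_fresh {n : ℕ} (hn : 1 ≤ n) (v : ℕ → ℕ) (h1 : 1 ≤ v 1) (h2 : v (n+1) = 0)
    (hv : ∑ k ∈ Finset.Icc 1 (n+1), k * v k = n+1) :
    ∑ k ∈ Finset.Icc 1 n, k * freshType v k = n := by
  have h1mem : (1 : ℕ) ∈ Finset.Icc 1 n := by simp [Finset.mem_Icc]; omega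
  have e1 : 1 * freshType v 1 + ∑ k ∈ (Finset.Icc 1 n).erase 1, k * freshType v k
      = ∑ k ∈ Finset.Icc 1 n, k * freshType v k := Finset.add_sum_erase _ (fun k => k * freshType v k) h1mem
  have e2 : 1 * v 1 + ∑ k ∈ (Finset.Icc 1 n).erase 1, k * v k
      = ∑ k ∈ Finset.Icc 1 n, k * v k := Finset.add_sum_erase _ (fun k => k * v k) h1mem
  have e3 : ∑ k ∈ (Finset.Icc 1 n).erase 1, k * freshType v k
      = ∑ k ∈ (Finset.Icc 1 n).erase 1, k * v k := by
    apply Finset.sum_congr rfl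
    intro k hk
    have := Finset.ne_of_mem_erase hk
    unfold freshType
    rw [if_neg this]
  have e4 := sum_Icc_succ n v
  rw [h2, Nat.mul_zero] at e4
  have hval : freshType v 1 = v 1 - 1 := by unfold freshType; rw [if_pos rfl]
  rw [hval] at e1
  omega

lemma sum_join {n : ℕ} (v : ℕ → ℕ) {j : ℕ} (hj : j ∈ Finset.Icc 1 n)
    (hC1 : 1 ≤ v (j+1)) (hC2 : v (n+1) = if j = n then 1 else 0)
    (hv : ∑ k ∈ Finset.Icc 1 (n+1), k * v k = n+1) :
    ∑ k ∈ Finset.Icc 1 n, k * joinType v j k = n := by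
  rw [Finset.mem_Icc] at hj
  have e4 := sum_Icc_succ n v
  have hjmem : j ∈ Finset.Icc 1 n := by simp [Finset.mem_Icc]; omega
  by_cases hjn : j = n
  · -- only point j changes within Icc 1 n
    subst hjn
    rw [if_pos rfl] at hC2
    have e1 : j * joinType v j j + ∑ k ∈ (Finset.Icc 1 j).erase j, k * joinType v j k
        = ∑ k ∈ Finset.Icc 1 j, k * joinType v j k := Finset.add_sum_erase _ (fun k => k * joinType v j k) hjmem
    have e2 : j * v j + ∑ k ∈ (Finset.Icc 1 j).erase j, k * v k
        = ∑ k ∈ Finset.Icc 1 j, k * v k := Finset.add_sum_erase _ (fun k => k * v k) hjmem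
    have e3 : ∑ k ∈ (Finset.Icc 1 j).erase j, k * joinType v j k
        = ∑ k ∈ (Finset.Icc 1 j).erase j, k * v k := by
      apply Finset.sum_congr rfl
      intro k hk
      have h5 := Finset.ne_of_mem_erase hk
      have h6 := Finset.mem_Icc.1 (Finset.mem_of_mem_erase hk)
      unfold joinType
      rw [if_neg h5, if_neg (by omega)]
    have hval : joinType v j j = v j + 1 := by unfold joinType; rw [if_pos rfl]
    rw [hval] at e1
    rw [hC2, Nat.mul_one] at e4
    have hkey : j * (v j + 1) = j * v j + j := by ring
    omega
  · have hj1mem : j + 1 ∈ (Finset.Icc 1 n).erase j := by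
      rw [Finset.mem_erase, Finset.mem_Icc]; omega
    rw [if_neg hjn] at hC2
    have e1 : j * joinType v j j + ∑ k ∈ (Finset.Icc 1 n).erase j, k * joinType v j k
        = ∑ k ∈ Finset.Icc 1 n, k * joinType v j k := Finset.add_sum_erase _ (fun k => k * joinType v j k) hjmem
    have e2 : j * v j + ∑ k ∈ (Finset.Icc 1 n).erase j, k * v k
        = ∑ k ∈ Finset.Icc 1 n, k * v k := Finset.add_sum_erase _ (fun k => k * v k) hjmem
    have e1' : (j+1) * joinType v j (j+1)
          + ∑ k ∈ ((Finset.Icc 1 n).erase j).erase (j+1), k * joinType v j k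
        = ∑ k ∈ (Finset.Icc 1 n).erase j, k * joinType v j k :=
      Finset.add_sum_erase _ (fun k => k * joinType v j k) hj1mem
    have e2' : (j+1) * v (j+1)
          + ∑ k ∈ ((Finset.Icc 1 n).erase j).erase (j+1), k * v k
        = ∑ k ∈ (Finset.Icc 1 n).erase j, k * v k :=
      Finset.add_sum_erase _ (fun k => k * v k) hj1mem
    have e3 : ∑ k ∈ ((Finset.Icc 1 n).erase j).erase (j+1), k * joinType v j k
        = ∑ k ∈ ((Finset.Icc 1 n).erase j).erase (j+1), k * v k := by
      apply Finset.sum_congr rfl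
      intro k hk
      have h5 := Finset.ne_of_mem_erase hk
      have h6 := Finset.ne_of_mem_erase (Finset.mem_of_mem_erase hk)
      unfold joinType
      rw [if_neg h6, if_neg h5]
    have hval1 : joinType v j j = v j + 1 := by unfold joinType; rw [if_pos rfl]
    have hval2 : joinType v j (j+1) = v (j+1) - 1 := by
      unfold joinType; rw [if_neg (by omega), if_pos rfl]
    rw [hval1] at e1
    rw [hval2] at e1'
    rw [hC2, Nat.mul_zero] at e4
    have hk1 : j * (v j + 1) = j * v j + j := by ring
    have hk2 : (j+1) * (v (j+1) - 1) + (j+1) = (j+1) * v (j+1) := by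
      have h7 : (j+1) * (v (j+1) - 1 + 1) = (j+1) * (v (j+1)) := by
        rw [Nat.sub_add_cancel hC1]
      rw [Nat.mul_succ] at h7
      exact h7
    omega

noncomputable def ewensF (α : ℝ) (n : ℕ) (v : ℕ → ℕ) : ℝ :=
  (n.factorial : ℝ) / (∏ i ∈ Finset.range n, (α + i)) *
    ∏ j ∈ Finset.Icc 1 n, α ^ (v j) / ((j : ℝ) ^ (v j) * (v j).factorial)

lemma Icc_succ_insert' (n : ℕ) : Finset.Icc 1 (n+1) = insert (n+1) (Finset.Icc 1 n) :=
  Finset.ext fun a => by simp only [Finset.mem_Icc, Finset.mem_insert]; omega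

lemma prodP_pos {α : ℝ} (hα : 0 < α) (n : ℕ) : 0 < ∏ i ∈ Finset.range n, (α + i) :=
  Finset.prod_pos fun i _ => by positivity

lemma ewensF_nonneg {α : ℝ} (hα : 0 < α) (n : ℕ) (v : ℕ → ℕ) : 0 ≤ ewensF α n v := by
  unfold ewensF
  apply mul_nonneg
  · apply div_nonneg (by positivity) (le_of_lt (prodP_pos hα n))
  · apply Finset.prod_nonneg
    intro j _
    positivity

lemma gterm_one {α : ℝ} (k : ℕ) (m : ℕ) (hm : m = 0) :
    α ^ m / ((k : ℝ) ^ m * m.factorial) = 1 := by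
  subst hm; simp

/-- decomposition of the Icc product at one point -/
lemma prod_Icc_erase {n : ℕ} (g : ℕ → ℝ) {a : ℕ} (ha : a ∈ Finset.Icc 1 n) :
    ∏ k ∈ Finset.Icc 1 n, g k = g a * ∏ k ∈ (Finset.Icc 1 n).erase a, g k :=
  (Finset.mul_prod_erase _ g ha).symm

lemma ewensF_fresh {α : ℝ} (hα : 0 < α) {n : ℕ} (hn : 1 ≤ n) (v : ℕ → ℕ)
    (h1 : 1 ≤ v 1) (h2 : v (n+1) = 0) :
    α / (α + n) * ewensF α n (freshType v)
      = (v 1 : ℝ) / (n+1) * ewensF α (n+1) v := by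
  obtain ⟨m, hm⟩ : ∃ m, v 1 = m + 1 := ⟨v 1 - 1, by omega⟩
  have h1mem : (1 : ℕ) ∈ Finset.Icc 1 n := by rw [Finset.mem_Icc]; omega
  set g : ℕ → ℝ := fun k => α ^ (v k) / ((k : ℝ) ^ (v k) * (v k).factorial) with hg
  set gf : ℕ → ℝ := fun k => α ^ (freshType v k) / ((k : ℝ) ^ (freshType v k)
      * (freshType v k).factorial) with hgf
  have hcong : ∀ k ∈ (Finset.Icc 1 n).erase 1, gf k = g k := by
    intro k hk
    have := Finset.ne_of_mem_erase hk
    simp only [hgf, hg, freshType, if_neg this]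
  set R : ℝ := ∏ k ∈ (Finset.Icc 1 n).erase 1, g k with hR
  have hRnn : 0 ≤ R := Finset.prod_nonneg fun k _ => by positivity
  have hPf : ∏ k ∈ Finset.Icc 1 n, gf k = gf 1 * R := by
    rw [prod_Icc_erase gf h1mem, hR]
    congr 1
    exact Finset.prod_congr rfl hcong
  have hPv : ∏ k ∈ Finset.Icc 1 n, g k = g 1 * R := prod_Icc_erase g h1mem
  have hPv' : ∏ k ∈ Finset.Icc 1 (n+1), g k = g 1 * R := by
    rw [Icc_succ_insert', Finset.prod_insert (by simp [Finset.mem_Icc]), hPv]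
    have : g (n+1) = 1 := gterm_one (n+1) (v (n+1)) h2
    rw [this, one_mul]
  have hgf1 : gf 1 = α ^ m / m.factorial := by
    simp only [hgf, freshType, if_pos rfl, hm]
    simp
  have hg1 : g 1 = α ^ (m+1) / (m+1).factorial := by
    simp only [hg, hm]
    simp
  have hP : ∏ i ∈ Finset.range (n+1), (α + i) = (∏ i ∈ Finset.range n, (α + i)) * (α + n) := by
    rw [Finset.prod_range_succ]
  unfold ewensF
  rw [hPf, hPv', hgf1, hg1, hP, hm]
  have hPn := prodP_pos hα n
  have hfac : ((m+1).factorial : ℝ) = (m+1) * m.factorial := by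
    rw [Nat.factorial_succ]; push_cast; ring
  have hfacpos : (0:ℝ) < m.factorial := by positivity
  have hαn : (0:ℝ) < α + n := by positivity
  have hnf : ((n+1).factorial : ℝ) = (n+1) * n.factorial := by
    rw [Nat.factorial_succ]; push_cast; ring
  rw [hfac, hnf]
  push_cast
  field_simp
  ring

lemma ewensF_join_lt {α : ℝ} (hα : 0 < α) {n : ℕ} (v : ℕ → ℕ) {j : ℕ}
    (hj1 : 1 ≤ j) (hjn : j < n)
    (hC1 : 1 ≤ v (j+1)) (hC2 : v (n+1) = 0) :
    1 / (α + n) * (j * (v j + 1) : ℝ) * ewensF α n (joinType v j)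
      = ((j+1) * v (j+1) : ℝ) / (n+1) * ewensF α (n+1) v := by
  obtain ⟨m, hm⟩ : ∃ m, v (j+1) = m + 1 := ⟨v (j+1) - 1, by omega⟩
  have hjmem : j ∈ Finset.Icc 1 n := by rw [Finset.mem_Icc]; omega
  have hj1mem : j + 1 ∈ (Finset.Icc 1 n).erase j := by
    rw [Finset.mem_erase, Finset.mem_Icc]; omega
  set g : ℕ → ℝ := fun k => α ^ (v k) / ((k : ℝ) ^ (v k) * (v k).factorial) with hg
  set w := joinType v j with hw
  set gw : ℕ → ℝ := fun k => α ^ (w k) / ((k : ℝ) ^ (w k) * (w k).factorial) with hgw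
  have hcong : ∀ k ∈ ((Finset.Icc 1 n).erase j).erase (j+1), gw k = g k := by
    intro k hk
    have h5 := Finset.ne_of_mem_erase hk
    have h6 := Finset.ne_of_mem_erase (Finset.mem_of_mem_erase hk)
    simp only [hgw, hg, hw, joinType, if_neg h6, if_neg h5]
  set R : ℝ := ∏ k ∈ ((Finset.Icc 1 n).erase j).erase (j+1), g k with hR
  have hPw : ∏ k ∈ Finset.Icc 1 n, gw k = gw j * (gw (j+1) * R) := by
    rw [prod_Icc_erase gw hjmem, Finset.mul_prod_erase _ gw hj1mem |>.symm, hR]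
    congr 2
    exact Finset.prod_congr rfl hcong
  have hPv : ∏ k ∈ Finset.Icc 1 n, g k = g j * (g (j+1) * R) := by
    rw [prod_Icc_erase g hjmem, Finset.mul_prod_erase _ g hj1mem |>.symm, hR]
  have hPv' : ∏ k ∈ Finset.Icc 1 (n+1), g k = g j * (g (j+1) * R) := by
    rw [Icc_succ_insert', Finset.prod_insert (by simp [Finset.mem_Icc]), hPv]
    have : g (n+1) = 1 := gterm_one (n+1) (v (n+1)) hC2
    rw [this, one_mul]
  have hwj : w j = v j + 1 := by simp [hw, joinType]
  have hwj1 : w (j+1) = m := by simp [hw, joinType, hm]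
  have hgwj : gw j = α ^ (v j + 1) / ((j:ℝ) ^ (v j + 1) * (v j + 1).factorial) := by
    simp only [hgw, hwj]
  have hgwj1 : gw (j+1) = α ^ m / (((j:ℝ)+1) ^ m * m.factorial) := by
    simp only [hgw, hwj1]; push_cast; ring_nf
  have hgj : g j = α ^ (v j) / ((j:ℝ) ^ (v j) * (v j).factorial) := rfl
  have hgj1 : g (j+1) = α ^ (m+1) / (((j:ℝ)+1) ^ (m+1) * (m+1).factorial) := by
    simp only [hg, hm]; push_cast; ring_nf
  have hP : ∏ i ∈ Finset.range (n+1), (α + i) = (∏ i ∈ Finset.range n, (α + i)) * (α + n) := by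
    rw [Finset.prod_range_succ]
  unfold ewensF
  rw [hPw, hPv', hgwj, hgwj1, hgj, hgj1, hP, hm]
  have hPn := prodP_pos hα n
  have hαn : (0:ℝ) < α + n := by positivity
  have hjpos : (0:ℝ) < j := by exact_mod_cast hj1
  have hfac1 : ((v j + 1).factorial : ℝ) = (v j + 1) * (v j).factorial := by
    rw [Nat.factorial_succ]; push_cast; ring
  have hfac2 : ((m+1).factorial : ℝ) = (m+1) * m.factorial := by
    rw [Nat.factorial_succ]; push_cast; ring
  have hnf : ((n+1).factorial : ℝ) = (n+1) * n.factorial := by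
    rw [Nat.factorial_succ]; push_cast; ring
  rw [hfac1, hfac2, hnf, pow_succ, pow_succ]
  push_cast
  have hfp1 : (0:ℝ) < ((v j).factorial : ℝ) := by positivity
  have hfp2 : (0:ℝ) < (m.factorial : ℝ) := by positivity
  have hfp3 : (0:ℝ) < (n.factorial : ℝ) := by positivity
  field_simp
  ring

lemma ewensF_join_eq {α : ℝ} (hα : 0 < α) {n : ℕ} (hn : 1 ≤ n) (v : ℕ → ℕ)
    (hC2 : v (n+1) = 1) :
    1 / (α + n) * (n * (v n + 1) : ℝ) * ewensF α n (joinType v n)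
      = ((n+1) * v (n+1) : ℝ) / (n+1) * ewensF α (n+1) v := by
  have hjmem : n ∈ Finset.Icc 1 n := by rw [Finset.mem_Icc]; omega
  set g : ℕ → ℝ := fun k => α ^ (v k) / ((k : ℝ) ^ (v k) * (v k).factorial) with hg
  set w := joinType v n with hw
  set gw : ℕ → ℝ := fun k => α ^ (w k) / ((k : ℝ) ^ (w k) * (w k).factorial) with hgw
  have hcong : ∀ k ∈ (Finset.Icc 1 n).erase n, gw k = g k := by
    intro k hk
    have h5 := Finset.ne_of_mem_erase hk
    have h6 := Finset.mem_Icc.1 (Finset.mem_of_mem_erase hk)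
    simp only [hgw, hg, hw, joinType, if_neg h5, if_neg (show ¬ k = n + 1 by omega)]
  set R : ℝ := ∏ k ∈ (Finset.Icc 1 n).erase n, g k with hR
  have hPw : ∏ k ∈ Finset.Icc 1 n, gw k = gw n * R := by
    rw [prod_Icc_erase gw hjmem, hR]
    congr 1
    exact Finset.prod_congr rfl hcong
  have hPv : ∏ k ∈ Finset.Icc 1 n, g k = g n * R := prod_Icc_erase g hjmem
  have hPv' : ∏ k ∈ Finset.Icc 1 (n+1), g k = g (n+1) * (g n * R) := by
    rw [Icc_succ_insert', Finset.prod_insert (by simp [Finset.mem_Icc]), hPv]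
  have hwn : w n = v n + 1 := by simp [hw, joinType]
  have hgwn : gw n = α ^ (v n + 1) / ((n:ℝ) ^ (v n + 1) * (v n + 1).factorial) := by
    simp only [hgw, hwn]
  have hgn : g n = α ^ (v n) / ((n:ℝ) ^ (v n) * (v n).factorial) := rfl
  have hgn1 : g (n+1) = α / ((n:ℝ)+1) := by
    simp only [hg, hC2]
    push_cast
    simp
  have hP : ∏ i ∈ Finset.range (n+1), (α + i) = (∏ i ∈ Finset.range n, (α + i)) * (α + n) := by
    rw [Finset.prod_range_succ]
  unfold ewensF
  rw [hPw, hPv', hgwn, hgn, hgn1, hP, hC2]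
  have hPn := prodP_pos hα n
  have hαn : (0:ℝ) < α + n := by positivity
  have hnpos : (0:ℝ) < n := by exact_mod_cast hn
  have hfac1 : ((v n + 1).factorial : ℝ) = (v n + 1) * (v n).factorial := by
    rw [Nat.factorial_succ]; push_cast; ring
  have hnf : ((n+1).factorial : ℝ) = (n+1) * n.factorial := by
    rw [Nat.factorial_succ]; push_cast; ring
  rw [hfac1, hnf, pow_succ]
  push_cast
  have hfp1 : (0:ℝ) < ((v n).factorial : ℝ) := by positivity
  have hfp3 : (0:ℝ) < (n.factorial : ℝ) := by positivity
  field_simp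
  ring

lemma measurable_fiberCard_apply {n : ℕ} (i : Fin n) :
    Measurable fun x : Fin n → ℝ => fiberCard x (x i) := by
  simp only [fiberCard_eq_sum]
  apply Finset.measurable_sum
  intro i' _
  apply Measurable.ite _ measurable_const measurable_const
  exact measurableSet_eq_fun (measurable_pi_apply i') (measurable_pi_apply i)

lemma measurable_indexCount {n : ℕ} (j : ℕ) :
    Measurable fun x : Fin n → ℝ =>
      (Finset.univ.filter fun i => fiberCard x (x i) = j).card := by
  simp only [Finset.card_filter]
  apply Finset.measurable_sum
  intro i _
  apply Measurable.ite _ measurable_const measurable_const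
  exact (measurable_fiberCard_apply i) (measurableSet_singleton j)

lemma measurable_typeCount {n : ℕ} (j : ℕ) :
    Measurable fun x : Fin n → ℝ => typeCount x j := by
  rcases Nat.eq_zero_or_pos j with rfl | hj
  · simp only [typeCount_zero]; exact measurable_const
  · have : (fun x : Fin n → ℝ => typeCount x j)
        = (fun k => k / j) ∘ (fun x => (Finset.univ.filter
            fun i => fiberCard x (x i) = j).card) := by
      funext x
      simp only [Function.comp_apply, ← mul_typeCount]
      rw [Nat.mul_div_cancel_left _ hj]
    rw [this]
    exact (measurable_from_top).comp (measurable_indexCount j)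

lemma measurable_snoc {n : ℕ} :
    Measurable fun p : (Fin n → ℝ) × ℝ => (Fin.snoc p.1 p.2 : Fin (n+1) → ℝ) := by
  apply measurable_pi_lambda
  intro i
  induction i using Fin.lastCases with
  | last => simpa using measurable_snd
  | cast i => simp only [Fin.snoc_castSucc]; exact (measurable_pi_apply i).comp measurable_fst

lemma measurable_snoc_right {n : ℕ} (x : Fin n → ℝ) :
    Measurable (Fin.snoc (α := fun _ : Fin (n+1) => ℝ) x) :=
  measurable_snoc.comp (measurable_const.prodMk measurable_id)

lemma polyaStep_apply (α : ℝ) (G0 : Measure ℝ) {n : ℕ} (x : Fin n → ℝ) {s : Set ℝ}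
    (hs : MeasurableSet s) :
    polyaStep α G0 x s = ENNReal.ofReal (α / (α + n)) * G0 s
      + ENNReal.ofReal (1 / (α + n)) * ∑ i : Fin n, (if x i ∈ s then 1 else 0) := by
  have hd : ∀ i : Fin n, (Measure.dirac (x i)) s = (if x i ∈ s then (1:ENNReal) else 0) := by
    intro i
    rw [Measure.dirac_apply' _ hs]
    simp [Set.indicator_apply]
  rw [polyaStep, Measure.add_apply, Measure.smul_apply, Measure.smul_apply,
    Measure.finset_sum_apply, smul_eq_mul, smul_eq_mul]
  simp only [hd]

lemma measurable_polyaKernel (α : ℝ) (G0 : Measure ℝ) [SFinite G0] {n : ℕ} :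
    Measurable fun x : Fin n → ℝ => (polyaStep α G0 x).map (Fin.snoc (α := fun _ : Fin (n+1) => ℝ) x) := by
  apply Measure.measurable_of_measurable_coe
  intro s hs
  have hmap : ∀ x : Fin n → ℝ, (polyaStep α G0 x).map (Fin.snoc (α := fun _ : Fin (n+1) => ℝ) x) s
      = polyaStep α G0 x ((Fin.snoc (α := fun _ : Fin (n+1) => ℝ) x) ⁻¹' s) := fun x =>
    Measure.map_apply (measurable_snoc_right x) hs
  simp only [hmap]
  have hpre : ∀ x : Fin n → ℝ, ((Fin.snoc (α := fun _ : Fin (n+1) => ℝ) x) ⁻¹' s : Set ℝ)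
      = Prod.mk x ⁻¹' ((fun p : (Fin n → ℝ) × ℝ => (Fin.snoc p.1 p.2 : Fin (n+1) → ℝ)) ⁻¹' s) := by
    intro x; rfl
  have hG : Measurable fun x : Fin n → ℝ => G0 ((Fin.snoc (α := fun _ : Fin (n+1) => ℝ) x) ⁻¹' s) := by
    simp only [hpre]
    exact measurable_measure_prodMk_left (measurable_snoc hs)
  have hpres : ∀ x : Fin n → ℝ, MeasurableSet ((Fin.snoc (α := fun _ : Fin (n+1) => ℝ) x) ⁻¹' s) :=
    fun x => (measurable_snoc_right x) hs
  simp only [polyaStep_apply α G0 _ (hpres _)]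
  apply Measurable.add
  · exact (hG.const_mul _)
  · apply Measurable.const_mul
    apply Finset.measurable_sum
    intro i _
    have : ∀ x : Fin n → ℝ, ((if x i ∈ (Fin.snoc (α := fun _ : Fin (n+1) => ℝ) x) ⁻¹' s then 1 else 0) : ENNReal)
        = if (Fin.snoc x (x i) : Fin (n+1) → ℝ) ∈ s then 1 else 0 := by
      intro x; rfl
    simp only [this]
    apply Measurable.ite _ measurable_const measurable_const
    have hm : Measurable fun x : Fin n → ℝ => (Fin.snoc x (x i) : Fin (n+1) → ℝ) :=
      measurable_snoc.comp (measurable_id.prodMk (measurable_pi_apply i))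
    exact hm hs

lemma polyaLaw_isProb (α : ℝ) (hα : 0 < α) (G0 : Measure ℝ) [IsProbabilityMeasure G0]
    (n : ℕ) : IsProbabilityMeasure (polyaLaw α G0 n) := by
  induction n with
  | zero => rw [polyaLaw]; infer_instance
  | succ n ih =>
    constructor
    rw [polyaLaw, Measure.bind_apply MeasurableSet.univ
      (measurable_polyaKernel α G0).aemeasurable]
    have hstep : ∀ x : Fin n → ℝ, (polyaStep α G0 x).map (Fin.snoc (α := fun _ : Fin (n+1) => ℝ) x) Set.univ = 1 := by
      intro x
      rw [Measure.map_apply (measurable_snoc_right x) MeasurableSet.univ]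
      simp only [Set.preimage_univ]
      rw [polyaStep_apply α G0 x MeasurableSet.univ]
      simp only [Set.mem_univ, if_true, measure_univ, mul_one, Finset.sum_const,
        Finset.card_univ, Fintype.card_fin, nsmul_eq_mul]
      have hpos : (0:ℝ) < α + n := by positivity
      rw [← ENNReal.ofReal_natCast n, ← ENNReal.ofReal_mul (by positivity),
        ← ENNReal.ofReal_add (by positivity) (by positivity)]
      rw [show α / (α + n) + 1 / (α + n) * n = 1 by field_simp]
      simp
    simp only [hstep]
    simp

-- ===== new material =====

lemma measurableSet_typePred {n : ℕ} (s : Finset ℕ) (P : ℕ → ℕ → Prop) :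
    MeasurableSet {x : Fin n → ℝ | ∀ j ∈ s, P j (typeCount x j)} := by
  have h : {x : Fin n → ℝ | ∀ j ∈ s, P j (typeCount x j)}
      = ⋂ j ∈ (s : Set ℕ), (fun x : Fin n → ℝ => typeCount x j) ⁻¹' {m | P j m} := by
    ext x; simp
  rw [h]
  exact MeasurableSet.biInter s.countable_toSet
    fun j _ => (measurable_typeCount j) (MeasurableSet.of_discrete)

lemma measurableSet_typeEvent {n : ℕ} (v : ℕ → ℕ) : MeasurableSet (typeEvent n v) :=
  measurableSet_typePred (Finset.Icc 1 n) (fun j m => m = v j)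

lemma measurableSet_setA {n : ℕ} (v : ℕ → ℕ) : MeasurableSet (setA n v) :=
  measurableSet_typePred (Finset.Icc 1 (n+1)) (fun j m => m + (if j = 1 then 1 else 0) = v j)

lemma measurableSet_setB {n : ℕ} (v : ℕ → ℕ) (j : ℕ) : MeasurableSet (setB n v j) :=
  measurableSet_typePred (Finset.Icc 1 (n+1))
    (fun k m => m + (if k = j+1 then 1 else 0) = v k + (if k = j then 1 else 0))

lemma snoc_fresh_mem {n : ℕ} (v : ℕ → ℕ) (x : Fin n → ℝ) (y : ℝ) (hy : ∀ i, x i ≠ y) :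
    ((Fin.snoc x y : Fin (n+1) → ℝ) ∈ typeEvent (n+1) v) ↔ x ∈ setA n v := by
  unfold typeEvent setA
  simp only [Set.mem_setOf_eq]
  constructor
  · intro h j hj; rw [← h j hj, typeCount_snoc_fresh x y hy]
  · intro h j hj; rw [typeCount_snoc_fresh x y hy, h j hj]

lemma snoc_self_mem {n : ℕ} (v : ℕ → ℕ) (x : Fin n → ℝ) (i : Fin n) :
    ((Fin.snoc x (x i) : Fin (n+1) → ℝ) ∈ typeEvent (n+1) v)
      ↔ x ∈ setB n v (fiberCard x (x i)) := by
  unfold typeEvent setB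
  simp only [Set.mem_setOf_eq]
  constructor
  · intro h k hk
    have h1 := h k hk
    have h2 := typeCount_snoc_self x i k
    split_ifs at h2 ⊢ <;> omega
  · intro h k hk
    have h1 := h k hk
    have h2 := typeCount_snoc_self x i k
    split_ifs at h1 h2 <;> omega

lemma setB_typeCount {n : ℕ} (v : ℕ → ℕ) {j : ℕ} (hj : j ∈ Finset.Icc 1 n)
    {x : Fin n → ℝ} (hx : x ∈ setB n v j) : typeCount x j = v j + 1 := by
  rw [Finset.mem_Icc] at hj
  have h1 := hx j (by rw [Finset.mem_Icc]; omega)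
  rw [if_neg (by omega), if_pos rfl] at h1
  omega

lemma join_sum {n : ℕ} (v : ℕ → ℕ) (x : Fin n → ℝ) :
    ∑ i : Fin n, (if x ∈ setB n v (fiberCard x (x i)) then (1:ℝ≥0∞) else 0)
      = ∑ j ∈ Finset.Icc 1 n,
          ((j * (v j + 1) : ℕ) : ℝ≥0∞) * (if x ∈ setB n v j then 1 else 0) := by
  have hmaps : ∀ i ∈ (Finset.univ : Finset (Fin n)), fiberCard x (x i) ∈ Finset.Icc 1 n := by
    intro i _
    rw [Finset.mem_Icc]
    exact ⟨(fiberCard_pos_iff x (x i)).2 ⟨i, rfl⟩, fiberCard_le x (x i)⟩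
  rw [← Finset.sum_fiberwise_of_maps_to hmaps
    (fun i => if x ∈ setB n v (fiberCard x (x i)) then (1:ℝ≥0∞) else 0)]
  apply Finset.sum_congr rfl
  intro j hj
  have hcongr : ∀ i ∈ Finset.univ.filter (fun i => fiberCard x (x i) = j),
      (if x ∈ setB n v (fiberCard x (x i)) then (1:ℝ≥0∞) else 0)
        = (if x ∈ setB n v j then (1:ℝ≥0∞) else 0) := by
    intro i hi
    rw [(Finset.mem_filter.1 hi).2]
  rw [Finset.sum_congr rfl hcongr, Finset.sum_const]
  by_cases hmem : x ∈ setB n v j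
  · rw [if_pos hmem]
    have hcard : (Finset.univ.filter (fun i => fiberCard x (x i) = j)).card
        = j * (v j + 1) := by
      rw [← mul_typeCount, setB_typeCount v hj hmem]
    rw [hcard, nsmul_eq_mul]
  · rw [if_neg hmem, smul_zero, mul_zero]

lemma G0_fresh_indicator (G0 : Measure ℝ) [IsProbabilityMeasure G0]
    (hG0 : ∀ a : ℝ, G0 {a} = 0) {n : ℕ} (v : ℕ → ℕ) (x : Fin n → ℝ) :
    G0 ((Fin.snoc (α := fun _ : Fin (n+1) => ℝ) x) ⁻¹' typeEvent (n+1) v)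
      = if x ∈ setA n v then 1 else 0 := by
  haveI : NullSingletonClass G0 := ⟨hG0⟩
  have hrange : G0 (Set.range x) = 0 :=
    Set.Countable.measure_zero (Set.finite_range x).countable G0
  by_cases hmem : x ∈ setA n v
  · rw [if_pos hmem]
    have hsub : Set.univ ⊆ ((Fin.snoc (α := fun _ : Fin (n+1) => ℝ) x) ⁻¹' typeEvent (n+1) v)
        ∪ Set.range x := by
      intro y _
      by_cases hy : y ∈ Set.range x
      · exact Or.inr hy
      · left
        have hfresh : ∀ i, x i ≠ y := fun i hi => hy ⟨i, hi⟩
        exact Set.mem_preimage.2 ((snoc_fresh_mem v x y hfresh).2 hmem)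
    have h1 : (1:ℝ≥0∞) ≤ G0 ((Fin.snoc (α := fun _ : Fin (n+1) => ℝ) x) ⁻¹' typeEvent (n+1) v) := by
      calc (1:ℝ≥0∞) = G0 Set.univ := (measure_univ).symm
      _ ≤ G0 (((Fin.snoc (α := fun _ : Fin (n+1) => ℝ) x) ⁻¹' typeEvent (n+1) v) ∪ Set.range x) :=
          measure_mono hsub
      _ ≤ G0 ((Fin.snoc (α := fun _ : Fin (n+1) => ℝ) x) ⁻¹' typeEvent (n+1) v)
          + G0 (Set.range x) := measure_union_le _ _
      _ = G0 ((Fin.snoc (α := fun _ : Fin (n+1) => ℝ) x) ⁻¹' typeEvent (n+1) v) := by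
          rw [hrange, add_zero]
    exact le_antisymm prob_le_one h1
  · rw [if_neg hmem]
    apply measure_mono_null _ hrange
    intro y hy
    by_contra hyr
    have hfresh : ∀ i, x i ≠ y := fun i hi => hyr ⟨i, hi⟩
    exact hmem ((snoc_fresh_mem v x y hfresh).1 (Set.mem_preimage.1 hy))

lemma kernel_apply (α : ℝ) (G0 : Measure ℝ) [IsProbabilityMeasure G0]
    (hG0 : ∀ a : ℝ, G0 {a} = 0) {n : ℕ} (v : ℕ → ℕ) (x : Fin n → ℝ) :
    (polyaStep α G0 x).map (Fin.snoc (α := fun _ : Fin (n+1) => ℝ) x) (typeEvent (n+1) v)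
      = ENNReal.ofReal (α / (α + n)) * (if x ∈ setA n v then 1 else 0)
        + ENNReal.ofReal (1 / (α + n)) * ∑ j ∈ Finset.Icc 1 n,
            ((j * (v j + 1) : ℕ) : ℝ≥0∞) * (if x ∈ setB n v j then 1 else 0) := by
  have hE := measurableSet_typeEvent (n := n+1) v
  rw [Measure.map_apply (measurable_snoc_right x) hE,
    polyaStep_apply α G0 x ((measurable_snoc_right x) hE)]
  rw [G0_fresh_indicator G0 hG0 v x]
  congr 1
  congr 1
  rw [← join_sum v x]
  apply Finset.sum_congr rfl
  intro i _
  congr 1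
  rw [eq_iff_iff]
  exact (snoc_self_mem v x i)

lemma Icc_one_succ_insert (n : ℕ) (hn : 1 ≤ n) :
    Finset.Icc 1 (n+1) = insert 1 (Finset.Icc 2 (n+1)) :=
  Finset.ext fun a => by simp only [Finset.mem_Icc, Finset.mem_insert]; omega

lemma shift_sum (n : ℕ) (v : ℕ → ℕ) :
    ∑ j ∈ Finset.Icc 1 n, (j+1) * v (j+1) = ∑ k ∈ Finset.Icc 2 (n+1), k * v k := by
  rw [show Finset.Icc 2 (n+1) = Finset.image (· + 1) (Finset.Icc 1 n) from
    Finset.ext fun a => by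
      simp only [Finset.mem_Icc, Finset.mem_image]
      constructor
      · intro h; exact ⟨a - 1, by omega, by omega⟩
      · rintro ⟨b, hb, rfl⟩; omega]
  rw [Finset.sum_image (fun a _ b _ h => by omega)]

lemma coeff_sum (n : ℕ) (hn : 1 ≤ n) (v : ℕ → ℕ)
    (hv : ∑ j ∈ Finset.Icc 1 (n+1), j * v j = n+1) :
    v 1 + ∑ j ∈ Finset.Icc 1 n, (j+1) * v (j+1) = n+1 := by
  rw [shift_sum]
  rw [Icc_one_succ_insert n hn, Finset.sum_insert (by simp [Finset.mem_Icc])] at hv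
  omega

theorem ewens_aux (α : ℝ) (hα : 0 < α) (G0 : Measure ℝ) [IsProbabilityMeasure G0]
    (hG0 : ∀ a : ℝ, G0 {a} = 0) (n : ℕ) (hn : 1 ≤ n) :
    ∀ v : ℕ → ℕ, (∑ j ∈ Finset.Icc 1 n, j * v j = n) →
      polyaLaw α G0 n (typeEvent n v) = ENNReal.ofReal (ewensF α n v) := by
  induction n, hn using Nat.le_induction with
  | base =>
    intro v hv
    rw [Finset.Icc_self, Finset.sum_singleton, one_mul] at hv
    have hE := measurableSet_typeEvent (n := 1) v
    have hlaw : polyaLaw α G0 1 = (MeasureTheory.Measure.dirac Fin.elim0).bind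
        (fun x : Fin 0 → ℝ => (polyaStep α G0 x).map (Fin.snoc x)) := by
      rw [polyaLaw, polyaLaw]
    rw [hlaw, Measure.dirac_bind (measurable_polyaKernel α G0)]
    rw [Measure.map_apply (measurable_snoc_right Fin.elim0) hE]
    have hy : ∀ (y : ℝ) (i : Fin 0), Fin.elim0 i ≠ y := fun y i => i.elim0
    have hpre : (Fin.snoc (α := fun _ : Fin 1 => ℝ) Fin.elim0) ⁻¹' typeEvent 1 v
        = Set.univ := by
      ext y
      simp only [Set.mem_preimage, Set.mem_univ, iff_true]
      intro j hj
      rw [Finset.mem_Icc] at hj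
      have hj1 : j = 1 := by omega
      subst hj1
      rw [typeCount_snoc_fresh Fin.elim0 y (hy y) 1,
        typeCount_eq_zero_of_gt _ (by omega), if_pos rfl, hv]
    rw [hpre, polyaStep_apply α G0 _ MeasurableSet.univ]
    simp only [Finset.univ_eq_empty, Finset.sum_empty, mul_zero, add_zero,
      measure_univ, mul_one]
    have har : (α / (α + ((0:ℕ):ℝ))) = 1 := by
      rw [Nat.cast_zero, add_zero, div_self (ne_of_gt hα)]
    rw [har, ENNReal.ofReal_one]
    have hval : ewensF α 1 v = 1 := by
      unfold ewensF
      rw [Finset.prod_range_one, Finset.Icc_self, Finset.prod_singleton, hv]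
      rw [Nat.cast_zero, add_zero]
      push_cast
      field_simp
    rw [hval, ENNReal.ofReal_one]
  | succ n hn ih =>
    intro v hv
    haveI := polyaLaw_isProb α hα G0 n
    have hE := measurableSet_typeEvent (n := n+1) v
    rw [polyaLaw, Measure.bind_apply hE (measurable_polyaKernel α G0).aemeasurable]
    simp only [kernel_apply α G0 hG0 v]
    set μ := polyaLaw α G0 n with hμ
    set c1 := ENNReal.ofReal (α / (α + n)) with hc1
    set c2 := ENNReal.ofReal (1 / (α + n)) with hc2
    have hmA : Measurable (fun x : Fin n → ℝ => (if x ∈ setA n v then (1:ℝ≥0∞) else 0)) :=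
      Measurable.ite (measurableSet_setA v) measurable_const measurable_const
    have hmB : ∀ j, Measurable (fun x : Fin n → ℝ =>
        ((j * (v j + 1) : ℕ) : ℝ≥0∞) * (if x ∈ setB n v j then 1 else 0)) := fun j =>
      (Measurable.ite (measurableSet_setB v j) measurable_const measurable_const).const_mul _
    have hmS : Measurable (fun x : Fin n → ℝ => ∑ j ∈ Finset.Icc 1 n,
        ((j * (v j + 1) : ℕ) : ℝ≥0∞) * (if x ∈ setB n v j then 1 else 0)) :=
      Finset.measurable_sum _ (fun j _ => hmB j)
    rw [lintegral_add_left (hmA.const_mul c1)]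
    rw [lintegral_const_mul c1 hmA, lintegral_const_mul c2 hmS,
      lintegral_finset_sum _ (fun j _ => hmB j)]
    have hind : ∀ (A : Set (Fin n → ℝ)), MeasurableSet A →
        ∫⁻ x, (if x ∈ A then (1:ℝ≥0∞) else 0) ∂μ = μ A := by
      intro A hA
      have h8 : (fun x : Fin n → ℝ => (if x ∈ A then (1:ℝ≥0∞) else 0))
          = A.indicator (fun _ => 1) := by
        funext x; rw [Set.indicator_apply]
      rw [h8, lintegral_indicator hA, setLIntegral_one]
    rw [hind _ (measurableSet_setA v)]
    have hindB : ∀ j ∈ Finset.Icc 1 n,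
        ∫⁻ x, ((j * (v j + 1) : ℕ) : ℝ≥0∞) * (if x ∈ setB n v j then 1 else 0) ∂μ
          = ((j * (v j + 1) : ℕ) : ℝ≥0∞) * μ (setB n v j) := by
      intro j _
      rw [lintegral_const_mul _ (show Measurable (fun x : Fin n → ℝ =>
          if x ∈ setB n v j then (1:ℝ≥0∞) else 0) from Measurable.ite
          (measurableSet_setB v j) measurable_const measurable_const),
        hind _ (measurableSet_setB v j)]
    rw [Finset.sum_congr rfl hindB]
    -- term evaluations
    have hterm1 : c1 * μ (setA n v)
        = ENNReal.ofReal ((v 1 : ℝ) / (n+1) * ewensF α (n+1) v) := by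
      by_cases h1 : v 1 = 0
      · rw [setA_empty v h1, measure_empty, mul_zero, h1]
        simp
      · have h1' : 1 ≤ v 1 := Nat.one_le_iff_ne_zero.2 h1
        have h2 : v (n+1) = 0 := by
          have hsub : ({1, n+1} : Finset ℕ) ⊆ Finset.Icc 1 (n+1) := by
            intro a ha
            rw [Finset.mem_insert, Finset.mem_singleton] at ha
            rw [Finset.mem_Icc]
            rcases ha with rfl | rfl <;> omega
          have hle : ∑ k ∈ ({1, n+1} : Finset ℕ), k * v k ≤ n+1 := by
            have h := Finset.sum_le_sum_of_subset (f := fun k => k * v k) hsub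
            rwa [hv] at h
          rw [Finset.sum_pair (by omega : (1:ℕ) ≠ n+1)] at hle
          by_contra h3
          have h4 : 1 ≤ v (n+1) := Nat.one_le_iff_ne_zero.2 h3
          have h5 : n+1 ≤ (n+1) * v (n+1) := Nat.le_mul_of_pos_right _ (by omega)
          omega
        rw [setA_eq hn v h1' h2, ih (freshType v) (sum_fresh hn v h1' h2 hv), hc1]
        rw [← ENNReal.ofReal_mul (div_nonneg hα.le (by positivity))]
        rw [ewensF_fresh hα hn v h1' h2]
    have htermB : ∀ j ∈ Finset.Icc 1 n,
        c2 * (((j * (v j + 1) : ℕ) : ℝ≥0∞) * μ (setB n v j))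
          = ENNReal.ofReal (((j+1) * v (j+1) : ℝ) / (n+1) * ewensF α (n+1) v) := by
      intro j hj
      have hj' := Finset.mem_Icc.1 hj
      by_cases hb1 : v (j+1) = 0
      · rw [setB_empty1 v hj hb1, measure_empty, mul_zero, mul_zero, hb1]
        simp
      · have hb1' : 1 ≤ v (j+1) := Nat.one_le_iff_ne_zero.2 hb1
        have hC2 : v (n+1) = if j = n then 1 else 0 := by
          by_cases hjn : j = n
          · rw [if_pos hjn]; subst hjn
            have hmem : j+1 ∈ Finset.Icc 1 (j+1) := by rw [Finset.mem_Icc]; omega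
            have hle : (j+1) * v (j+1) ≤ j+1 := by
              have h := Finset.single_le_sum (f := fun k => k * v k)
                (fun k _ => Nat.zero_le _) hmem
              rwa [hv] at h
            have h6 : v (j+1) ≤ 1 := by
              by_contra h7
              have h8 : 2 ≤ v (j+1) := by omega
              have h9 : (j+1) * 2 ≤ (j+1) * v (j+1) := Nat.mul_le_mul_left _ h8
              omega
            omega
          · rw [if_neg hjn]
            have hsub : ({j+1, n+1} : Finset ℕ) ⊆ Finset.Icc 1 (n+1) := by
              intro a ha
              rw [Finset.mem_insert, Finset.mem_singleton] at ha
              rw [Finset.mem_Icc]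
              rcases ha with rfl | rfl <;> omega
            have hle : ∑ k ∈ ({j+1, n+1} : Finset ℕ), k * v k ≤ n+1 := by
              have h := Finset.sum_le_sum_of_subset (f := fun k => k * v k) hsub
              rwa [hv] at h
            rw [Finset.sum_pair (by omega : j+1 ≠ n+1)] at hle
            by_contra h3
            have h4 : 1 ≤ v (n+1) := Nat.one_le_iff_ne_zero.2 h3
            have h5 : n+1 ≤ (n+1) * v (n+1) := Nat.le_mul_of_pos_right _ (by omega)
            have h6 : j+1 ≤ (j+1) * v (j+1) := Nat.le_mul_of_pos_right _ (by omega)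
            omega
        rw [setB_eq v hj hb1' hC2, ih (joinType v j) (sum_join v hj hb1' hC2 hv), hc2]
        rw [show ((j * (v j + 1) : ℕ) : ℝ≥0∞)
            = ENNReal.ofReal ((j * (v j + 1) : ℕ) : ℝ) from (ENNReal.ofReal_natCast _).symm]
        rw [← ENNReal.ofReal_mul (by positivity), ← ENNReal.ofReal_mul (by positivity)]
        congr 1
        have hcast : (((j * (v j + 1) : ℕ)) : ℝ) = (j : ℝ) * ((v j : ℝ) + 1) := by
          push_cast; ring
        rw [hcast, ← mul_assoc]
        by_cases hjn : j = n
        · subst hjn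
          rw [if_pos rfl] at hC2
          exact ewensF_join_eq hα hn v hC2
        · rw [if_neg hjn] at hC2
          exact ewensF_join_lt hα v hj'.1 (by omega) hb1' hC2
    rw [hterm1, Finset.mul_sum, Finset.sum_congr rfl htermB]
    have hFnn : 0 ≤ ewensF α (n+1) v := ewensF_nonneg hα (n+1) v
    have hcoeffnn : ∀ j ∈ Finset.Icc 1 n,
        0 ≤ ((j+1) * v (j+1) : ℝ) / (n+1) * ewensF α (n+1) v := by
      intro j _
      apply mul_nonneg _ hFnn
      positivity
    rw [← ENNReal.ofReal_sum_of_nonneg hcoeffnn,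
      ← ENNReal.ofReal_add (mul_nonneg (by positivity) hFnn)
        (Finset.sum_nonneg hcoeffnn)]
    congr 1
    have h9 : ((v 1 + ∑ j ∈ Finset.Icc 1 n, (j+1) * v (j+1) : ℕ) : ℝ) = ((n+1 : ℕ) : ℝ) := by
      exact_mod_cast congrArg (Nat.cast : ℕ → ℝ) (coeff_sum n hn v hv)
    push_cast at h9
    have hne : ((n:ℝ)+1) ≠ 0 := by positivity
    have h10 : ((v 1 : ℝ) + ∑ j ∈ Finset.Icc 1 n, ((j:ℝ)+1) * (v (j+1):ℝ)) / ((n:ℝ)+1)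
          * ewensF α (n+1) v
        = (v 1 : ℝ)/(n+1) * ewensF α (n+1) v
          + ∑ j ∈ Finset.Icc 1 n, ((j:ℝ)+1) * (v (j+1):ℝ)/(n+1) * ewensF α (n+1) v := by
      rw [add_div, add_mul, Finset.sum_div, Finset.sum_mul]
    rw [← h10, h9, div_self hne, one_mul]

/-- Ewens sampling formula for the partition induced by `n` draws
of the Pólya urn scheme with precision `α > 0` and atomless base distribution. -/
theorem ewens_sampling_formula
    (α : ℝ) (hα : 0 < α) (G0 : Measure ℝ) [IsProbabilityMeasure G0]
    (hG0 : ∀ a : ℝ, G0 {a} = 0)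
    (n : ℕ) (hn : 1 ≤ n) (v : ℕ → ℕ)
    (hv : ∑ j ∈ Finset.Icc 1 n, j * v j = n) :
    polyaLaw α G0 n {x | ∀ j ∈ Finset.Icc 1 n, blocksOfSize x j = v j}
      = ENNReal.ofReal ((n.factorial : ℝ) / (∏ i ∈ Finset.range n, (α + i))
          * ∏ j ∈ Finset.Icc 1 n, α ^ (v j) / ((j : ℝ) ^ (v j) * (v j).factorial)) := by
  have hset : {x : Fin n → ℝ | ∀ j ∈ Finset.Icc 1 n, blocksOfSize x j = v j}
      = typeEvent n v := by
    ext x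
    unfold typeEvent
    simp only [Set.mem_setOf_eq, blocksOfSize_eq_typeCount]
  rw [hset]
  exact ewens_aux α hα G0 hG0 n hn v hv
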